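/- Degenerate Funk parabola of type 1: let y₀ ∈ (−1,1), let the focus F = (f₀, y₀) ∈ B² lie on the directrix s: y = y₀, and let P = (x,y) ∈ B² with P ≠ F. Then d_F(F,P) = ln ρ(y₀, y) holds if and only if x·(1 + sgn(y₀−y)·y₀) = f₀·(1 + sgn(y₀−y)·y); that is, P lies on the line segment (1−y₀)x − f₀(1−y) = 0 when y > y₀, or on the line segment (1+y₀)x − f₀(1+y) = 0 when y < y₀. -/

import Mathlib

/-- The Funk distance on the open unit ball of Euclidean n-space:
`d_F(P,Q) = ln((√k − ⟨P, Q−P⟩)/(√k − ⟨Q, Q−P⟩))` with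
`k = ⟨P, Q−P⟩² + (1 − ‖P‖²)‖Q−P‖²`. -/
noncomputable def funkDist {n : ℕ} (P Q : EuclideanSpace ℝ (Fin n)) : ℝ :=
  Real.log
    ((Real.sqrt ((inner ℝ P (Q - P) : ℝ) ^ 2 + (1 - ‖P‖ ^ 2) * ‖Q - P‖ ^ 2) - (inner ℝ P (Q - P) : ℝ)) /
     (Real.sqrt ((inner ℝ P (Q - P) : ℝ) ^ 2 + (1 - ‖P‖ ^ 2) * ‖Q - P‖ ^ 2) - (inner ℝ Q (Q - P) : ℝ)))

/-- `ρ(ε,η) = (1 + sgn(ε−η)·ε)/(1 + sgn(ε−η)·η)`. -/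
noncomputable def rho (ε η : ℝ) : ℝ :=
  (1 + Real.sign (ε - η) * ε) / (1 + Real.sign (ε - η) * η)

/-- The point `(a,b)` of the Euclidean plane. -/
def pt (a b : ℝ) : EuclideanSpace ℝ (Fin 2) := WithLp.toLp 2 ![a, b]

lemma inner_pt (a b c d : ℝ) : (inner ℝ (pt a b) (pt c d) : ℝ) = a*c + b*d := by
  simp [pt, PiLp.inner_apply, Fin.sum_univ_two]; ring

lemma pt_sub (a b c d : ℝ) : pt a b - pt c d = pt (a-c) (b-d) := by
  ext i; fin_cases i <;> simp [pt]

lemma norm_pt_sq (a b : ℝ) : ‖pt a b‖^2 = a^2 + b^2 := by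
  rw [EuclideanSpace.norm_eq, Real.sq_sqrt (by positivity)]
  simp [pt, Fin.sum_univ_two]

lemma funkDist_pt (f₀ y₀ x y : ℝ) :
    funkDist (pt f₀ y₀) (pt x y) =
      Real.log ((Real.sqrt ((f₀*(x-f₀)+y₀*(y-y₀))^2 + (1-(f₀^2+y₀^2))*((x-f₀)^2+(y-y₀)^2)) - (f₀*(x-f₀)+y₀*(y-y₀))) /
        (Real.sqrt ((f₀*(x-f₀)+y₀*(y-y₀))^2 + (1-(f₀^2+y₀^2))*((x-f₀)^2+(y-y₀)^2)) - (f₀*(x-f₀)+y₀*(y-y₀)+((x-f₀)^2+(y-y₀)^2)))) := by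
  rw [funkDist, pt_sub, inner_pt, inner_pt, norm_pt_sq, norm_pt_sq,
    show x*(x-f₀)+y*(y-y₀) = f₀*(x-f₀)+y₀*(y-y₀)+((x-f₀)^2+(y-y₀)^2) by ring]

lemma pos_facts (f₀ y₀ x y : ℝ) (hF : f₀^2+y₀^2 < 1) (hP : x^2+y^2 < 1)
    (hw : 0 < (x-f₀)^2+(y-y₀)^2) :
    0 < Real.sqrt ((f₀*(x-f₀)+y₀*(y-y₀))^2 + (1-(f₀^2+y₀^2))*((x-f₀)^2+(y-y₀)^2)) - (f₀*(x-f₀)+y₀*(y-y₀)) ∧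
    0 < Real.sqrt ((f₀*(x-f₀)+y₀*(y-y₀))^2 + (1-(f₀^2+y₀^2))*((x-f₀)^2+(y-y₀)^2)) - (f₀*(x-f₀)+y₀*(y-y₀)+((x-f₀)^2+(y-y₀)^2)) := by
  set K := Real.sqrt ((f₀*(x-f₀)+y₀*(y-y₀))^2 + (1-(f₀^2+y₀^2))*((x-f₀)^2+(y-y₀)^2)) with hK
  have hk0 : 0 ≤ (f₀*(x-f₀)+y₀*(y-y₀))^2 + (1-(f₀^2+y₀^2))*((x-f₀)^2+(y-y₀)^2) := by nlinarith [sq_nonneg (f₀*(x-f₀)+y₀*(y-y₀))]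
  have hK0 : 0 ≤ K := Real.sqrt_nonneg _
  have hK2 : K^2 = (f₀*(x-f₀)+y₀*(y-y₀))^2 + (1-(f₀^2+y₀^2))*((x-f₀)^2+(y-y₀)^2) :=
    Real.sq_sqrt hk0
  constructor
  · nlinarith [sq_nonneg (K + (f₀*(x-f₀)+y₀*(y-y₀)))]
  · nlinarith [sq_nonneg (K + (f₀*(x-f₀)+y₀*(y-y₀)+((x-f₀)^2+(y-y₀)^2))),
      mul_pos hw (show (0:ℝ) < 1-(x^2+y^2) by linarith)]

set_option maxHeartbeats 1000000 in
lemma aux (f₀ y₀ x y s : ℝ) (hs : s = 1 ∨ s = -1) (hF : f₀^2+y₀^2 < 1)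
    (hP : x^2+y^2 < 1) (hsv : s*(y-y₀) < 0) :
    (Real.log ((Real.sqrt ((f₀*(x-f₀)+y₀*(y-y₀))^2 + (1-(f₀^2+y₀^2))*((x-f₀)^2+(y-y₀)^2)) - (f₀*(x-f₀)+y₀*(y-y₀))) /
        (Real.sqrt ((f₀*(x-f₀)+y₀*(y-y₀))^2 + (1-(f₀^2+y₀^2))*((x-f₀)^2+(y-y₀)^2)) - (f₀*(x-f₀)+y₀*(y-y₀)+((x-f₀)^2+(y-y₀)^2))))
      = Real.log ((1+s*y₀)/(1+s*y))) ↔ x*(1+s*y₀) = f₀*(1+s*y) := by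
  obtain ⟨hA, hB⟩ := pos_facts f₀ y₀ x y hF hP (by nlinarith [sq_nonneg (x-f₀), sq_nonneg (y-y₀), sq_nonneg s, hsv])
  set K := Real.sqrt ((f₀*(x-f₀)+y₀*(y-y₀))^2 + (1-(f₀^2+y₀^2))*((x-f₀)^2+(y-y₀)^2)) with hKdef
  have hk0 : 0 ≤ (f₀*(x-f₀)+y₀*(y-y₀))^2 + (1-(f₀^2+y₀^2))*((x-f₀)^2+(y-y₀)^2) := by
    nlinarith [sq_nonneg (f₀*(x-f₀)+y₀*(y-y₀)), sq_nonneg (x-f₀), sq_nonneg (y-y₀)]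
  have hK2 : K^2 = (f₀*(x-f₀)+y₀*(y-y₀))^2 + (1-(f₀^2+y₀^2))*((x-f₀)^2+(y-y₀)^2) :=
    Real.sq_sqrt hk0
  have hK0 : 0 ≤ K := Real.sqrt_nonneg _
  have hy2 : y^2 < 1 := by nlinarith [sq_nonneg x]
  have hy02 : y₀^2 < 1 := by nlinarith [sq_nonneg f₀]
  have hy' : 0 < 1 + s*y := by rcases hs with rfl|rfl <;> nlinarith
  have hy0' : 0 < 1 + s*y₀ := by rcases hs with rfl|rfl <;> nlinarith
  have hm : 0 < -(s*(y-y₀)) := by linarith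
  rw [Real.log_injOn_pos.eq_iff (Set.mem_Ioi.mpr (div_pos hA hB)) (Set.mem_Ioi.mpr (div_pos hy0' hy')),
    div_eq_div_iff hB.ne' hy'.ne']
  -- reduce to K * m = R
  have step : ((K - (f₀*(x-f₀)+y₀*(y-y₀))) * (1+s*y) = (1+s*y₀) * (K - (f₀*(x-f₀)+y₀*(y-y₀)+((x-f₀)^2+(y-y₀)^2)))) ↔
      K * (-(s*(y-y₀))) = (f₀*(x-f₀)+y₀*(y-y₀)) * (-(s*(y-y₀))) + ((x-f₀)^2+(y-y₀)^2)*(1+s*y₀) := by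
    constructor <;> intro h <;> linear_combination -h
  rw [step]
  rcases hs with rfl|rfl
  · constructor
    · intro h
      have h2 : K^2 * (-(1*(y-y₀)))^2 = ((f₀*(x-f₀)+y₀*(y-y₀)) * (-(1*(y-y₀))) + ((x-f₀)^2+(y-y₀)^2)*(1+1*y₀))^2 := by
        linear_combination (K * (-(1*(y-y₀))) + ((f₀*(x-f₀)+y₀*(y-y₀)) * (-(1*(y-y₀))) + ((x-f₀)^2+(y-y₀)^2)*(1+1*y₀))) * h
      have h3 : ((x-f₀)^2+(y-y₀)^2) * ((x-f₀)*(1+1*y₀) - 1*f₀*(y-y₀))^2 = 0 := by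
        linear_combination -h2 + (-(1*(y-y₀)))^2 * hK2
      have hD : (x-f₀)*(1+1*y₀) - 1*f₀*(y-y₀) = 0 := by
        have hw' : (0:ℝ) < (x-f₀)^2+(y-y₀)^2 := by nlinarith [sq_nonneg (x-f₀)]
        have := (mul_eq_zero.mp h3).resolve_left (ne_of_gt hw')
        exact pow_eq_zero_iff two_ne_zero |>.mp this
      linear_combination hD
    · intro h
      have hD : (x-f₀)*(1+1*y₀) - 1*f₀*(y-y₀) = 0 := by linear_combination h
      have hR : (f₀*(x-f₀)+y₀*(y-y₀)) * (-(1*(y-y₀))) + ((x-f₀)^2+(y-y₀)^2)*(1+1*y₀) = (y-y₀)^2 := by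
        linear_combination (x-f₀)*hD
      have hkm : K^2 * (-(1*(y-y₀)))^2 = ((f₀*(x-f₀)+y₀*(y-y₀)) * (-(1*(y-y₀))) + ((x-f₀)^2+(y-y₀)^2)*(1+1*y₀))^2 := by
        linear_combination (-(((x-f₀)^2+(y-y₀)^2)*((x-f₀)*(1+1*y₀) - 1*f₀*(y-y₀))))*hD + (-(1*(y-y₀)))^2 * hK2
      have h4 : (K * (-(1*(y-y₀))) - ((f₀*(x-f₀)+y₀*(y-y₀)) * (-(1*(y-y₀))) + ((x-f₀)^2+(y-y₀)^2)*(1+1*y₀))) * (K * (-(1*(y-y₀))) + ((f₀*(x-f₀)+y₀*(y-y₀)) * (-(1*(y-y₀))) + ((x-f₀)^2+(y-y₀)^2)*(1+1*y₀))) = 0 := by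
        linear_combination hkm
      rcases mul_eq_zero.mp h4 with h5|h5
      · linear_combination h5
      · linarith only [h5, hR, mul_nonneg hK0 hm.le, sq_nonneg (y-y₀)]
  · constructor
    · intro h
      have h2 : K^2 * (-(-1*(y-y₀)))^2 = ((f₀*(x-f₀)+y₀*(y-y₀)) * (-(-1*(y-y₀))) + ((x-f₀)^2+(y-y₀)^2)*(1+-1*y₀))^2 := by
        linear_combination (K * (-(-1*(y-y₀))) + ((f₀*(x-f₀)+y₀*(y-y₀)) * (-(-1*(y-y₀))) + ((x-f₀)^2+(y-y₀)^2)*(1+-1*y₀))) * h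
      have h3 : ((x-f₀)^2+(y-y₀)^2) * ((x-f₀)*(1+-1*y₀) - -1*f₀*(y-y₀))^2 = 0 := by
        linear_combination -h2 + (-(-1*(y-y₀)))^2 * hK2
      have hD : (x-f₀)*(1+-1*y₀) - -1*f₀*(y-y₀) = 0 := by
        have hw' : (0:ℝ) < (x-f₀)^2+(y-y₀)^2 := by nlinarith [sq_nonneg (x-f₀)]
        have := (mul_eq_zero.mp h3).resolve_left (ne_of_gt hw')
        exact pow_eq_zero_iff two_ne_zero |>.mp this
      linear_combination hD
    · intro h
      have hD : (x-f₀)*(1+-1*y₀) - -1*f₀*(y-y₀) = 0 := by linear_combination h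
      have hR : (f₀*(x-f₀)+y₀*(y-y₀)) * (-(-1*(y-y₀))) + ((x-f₀)^2+(y-y₀)^2)*(1+-1*y₀) = (y-y₀)^2 := by
        linear_combination (x-f₀)*hD
      have hkm : K^2 * (-(-1*(y-y₀)))^2 = ((f₀*(x-f₀)+y₀*(y-y₀)) * (-(-1*(y-y₀))) + ((x-f₀)^2+(y-y₀)^2)*(1+-1*y₀))^2 := by
        linear_combination (-(((x-f₀)^2+(y-y₀)^2)*((x-f₀)*(1+-1*y₀) - -1*f₀*(y-y₀))))*hD + (-(-1*(y-y₀)))^2 * hK2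
      have h4 : (K * (-(-1*(y-y₀))) - ((f₀*(x-f₀)+y₀*(y-y₀)) * (-(-1*(y-y₀))) + ((x-f₀)^2+(y-y₀)^2)*(1+-1*y₀))) * (K * (-(-1*(y-y₀))) + ((f₀*(x-f₀)+y₀*(y-y₀)) * (-(-1*(y-y₀))) + ((x-f₀)^2+(y-y₀)^2)*(1+-1*y₀))) = 0 := by
        linear_combination hkm
      rcases mul_eq_zero.mp h4 with h5|h5
      · linear_combination h5
      · linarith only [h5, hR, mul_nonneg hK0 hm.le, sq_nonneg (y-y₀)]

/-- Degenerate type-1 Funk parabola: if the focus `F = (f₀, y₀)` lies on the directrix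
`y = y₀`, then for `P = (x,y) ≠ F` in the disk, `d_F(F,P) = ln ρ(y₀,y)` iff
`x·(1 + sgn(y₀−y)·y₀) = f₀·(1 + sgn(y₀−y)·y)`. -/
theorem funk_parabola_stmt6 (y₀ f₀ x y : ℝ) (hy₀ : -1 < y₀ ∧ y₀ < 1)
    (hF : ‖pt f₀ y₀‖ < 1) (hP : ‖pt x y‖ < 1) (hne : pt x y ≠ pt f₀ y₀) :
    funkDist (pt f₀ y₀) (pt x y) = Real.log (rho y₀ y) ↔
      x * (1 + Real.sign (y₀ - y) * y₀) = f₀ * (1 + Real.sign (y₀ - y) * y) := by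
  have hF' : f₀^2 + y₀^2 < 1 := by
    have := norm_pt_sq f₀ y₀; nlinarith [norm_nonneg (pt f₀ y₀)]
  have hP' : x^2 + y^2 < 1 := by
    have := norm_pt_sq x y; nlinarith [norm_nonneg (pt x y)]
  rw [funkDist_pt, rho]
  rcases lt_trichotomy y y₀ with h|h|h
  · rw [Real.sign_of_pos (by linarith : (0:ℝ) < y₀ - y)]
    exact aux f₀ y₀ x y 1 (Or.inl rfl) hF' hP' (by linarith)
  · rw [show Real.sign (y₀ - y) = 0 by rw [h, sub_self, Real.sign_zero],
      show Real.log ((1+(0:ℝ)*y₀)/(1+0*y)) = 0 by norm_num]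
    have hx : x ≠ f₀ := by
      intro hx'; apply hne; rw [h, hx']
    have hw : (0:ℝ) < (x-f₀)^2+(y-y₀)^2 := by
      have h0 : x - f₀ ≠ 0 := sub_ne_zero.mpr hx
      have : (x-f₀)^2 > 0 := by positivity
      nlinarith [sq_nonneg (y-y₀)]
    obtain ⟨hA, hB⟩ := pos_facts f₀ y₀ x y hF' hP' hw
    constructor
    · intro hlog
      exfalso
      have h1 : (1:ℝ) < (Real.sqrt ((f₀*(x-f₀)+y₀*(y-y₀))^2 + (1-(f₀^2+y₀^2))*((x-f₀)^2+(y-y₀)^2)) - (f₀*(x-f₀)+y₀*(y-y₀))) /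
          (Real.sqrt ((f₀*(x-f₀)+y₀*(y-y₀))^2 + (1-(f₀^2+y₀^2))*((x-f₀)^2+(y-y₀)^2)) - (f₀*(x-f₀)+y₀*(y-y₀)+((x-f₀)^2+(y-y₀)^2))) := by
        rw [lt_div_iff₀ hB]; linarith
      have := Real.log_pos h1
      linarith [hlog ▸ this]
    · intro hxf
      norm_num at hxf
      exact absurd hxf hx
  · rw [Real.sign_of_neg (by linarith : y₀ - y < 0)]
    exact aux f₀ y₀ x y (-1) (Or.inr rfl) hF' hP' (by linarith)
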